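/- Let K be a group acting on a set Δ, let ℓ ≥ 1, let L ≤ Equiv.Perm (Fin ℓ) be a subgroup, and let G = K ≀ L = (Fin ℓ → K) ⋊ L act on Δ^ℓ = (Fin ℓ → Δ) in product action by ((h, σ) • f)(i) = h(i) • f(σ⁻¹ i). Then for any field F, lindim_F(K ≀ L, Δ^ℓ) ≤ ℓ · lindim_F(K, Δ). -/

import Mathlib

/-- A representation of the action of `G` on `Ω` over the field `F`:
an injective map `φ : Ω → V` intertwining the `G`-action on `Ω` with a linear
`G`-action `ρ` on `V`. -/
def IsActionRep (F : Type*) [Field F] {G : Type*} [Group G] {Ω : Type*} [MulAction G Ω]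
    {V : Type*} [AddCommGroup V] [Module F V]
    (ρ : G →* (V ≃ₗ[F] V)) (φ : Ω → V) : Prop :=
  Function.Injective φ ∧ ∀ (g : G) (ω : Ω), φ (g • ω) = ρ g (φ ω)

/-- The `F`-linear dimension of the action of `G` on `Ω`: the infimum (in `ℕ∞`) of the
dimensions of finite-dimensional `F`-vector spaces affording a representation of the action. -/
noncomputable def lindim (F : Type*) [Field F] (G : Type*) [Group G] (Ω : Type*)
    [MulAction G Ω] : ℕ∞ :=
  ⨅ (n : ℕ) (_ : ∃ (ρ : G →* ((Fin n → F) ≃ₗ[F] (Fin n → F))) (φ : Ω → (Fin n → F)),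
      IsActionRep F ρ φ), (n : ℕ∞)

def permMulAut {S K : Type*} [Group K] (σ : Equiv.Perm S) : MulAut (S → K) :=
  { Equiv.arrowCongr σ (Equiv.refl K) with
    map_mul' := fun _ _ => rfl }

def permAutHom (S K : Type*) [Group K] : Equiv.Perm S →* MulAut (S → K) where
  toFun := permMulAut
  map_one' := MulEquiv.ext fun _ => funext fun _ => rfl
  map_mul' := fun _ _ => MulEquiv.ext fun _ => funext fun _ => rfl

/-- The wreath product `K ≀ L` of a group `K` with a subgroup `L ≤ Sym(Fin ℓ)`. -/
abbrev GroupWreath (K : Type*) [Group K] {l : ℕ} (L : Subgroup (Equiv.Perm (Fin l))) :=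
  (Fin l → K) ⋊[(permAutHom (Fin l) K).comp L.subtype] ↥L

/-- The product action of `K ≀ L` on `Fin ℓ → Δ`: `((h, σ) • f) i = h i • f (σ⁻¹ i)`. -/
instance groupWreathProductAction (K : Type*) [Group K] (Δ : Type*) [MulAction K Δ]
    {l : ℕ} (L : Subgroup (Equiv.Perm (Fin l))) :
    MulAction (GroupWreath K L) (Fin l → Δ) where
  smul g f := fun i => g.left i • f ((g.right : Equiv.Perm (Fin l))⁻¹ i)
  one_smul f := funext fun i => by
    show (1 : GroupWreath K L).left i •
      f (((1 : GroupWreath K L).right : Equiv.Perm (Fin l))⁻¹ i) = f i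
    simp
  mul_smul g₁ g₂ f := funext fun i => by
    show (g₁ * g₂).left i • f ((((g₁ * g₂).right : Equiv.Perm (Fin l)))⁻¹ i)
      = g₁.left i • (g₂.left ((g₁.right : Equiv.Perm (Fin l))⁻¹ i) •
          f ((g₂.right : Equiv.Perm (Fin l))⁻¹ ((g₁.right : Equiv.Perm (Fin l))⁻¹ i)))
    rw [SemidirectProduct.mul_left, SemidirectProduct.mul_right, Pi.mul_apply, mul_smul,
      Subgroup.coe_mul, mul_inv_rev, Equiv.Perm.mul_apply]
    rfl

section Aux

variable {F : Type*} [Field F] {K : Type*} [Group K]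
  {l : ℕ} {L : Subgroup (Equiv.Perm (Fin l))} {n : ℕ}

/-- The wreath representation on `Fin l → Fin n → F` built from a representation `ρ` of `K`. -/
def wreathRepAux (ρ : K →* ((Fin n → F) ≃ₗ[F] (Fin n → F))) :
    GroupWreath K L →* ((Fin l → Fin n → F) ≃ₗ[F] (Fin l → Fin n → F)) where
  toFun g :=
    (LinearEquiv.funCongrLeft F (Fin n → F)
        (((g.right : Equiv.Perm (Fin l))⁻¹ : Equiv.Perm (Fin l)) : Fin l ≃ Fin l)).trans
      (LinearEquiv.piCongrRight fun i => ρ (g.left i))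
  map_one' := by
    apply LinearEquiv.ext
    intro v
    funext i
    show ρ ((1 : GroupWreath K L).left i)
      (v (((1 : GroupWreath K L).right : Equiv.Perm (Fin l))⁻¹ i)) = v i
    simp
  map_mul' g₁ g₂ := by
    apply LinearEquiv.ext
    intro v
    funext i
    show ρ ((g₁ * g₂).left i) (v (((g₁ * g₂).right : Equiv.Perm (Fin l))⁻¹ i))
      = ρ (g₁.left i) ((ρ (g₂.left ((g₁.right : Equiv.Perm (Fin l))⁻¹ i)))
          (v ((g₂.right : Equiv.Perm (Fin l))⁻¹ ((g₁.right : Equiv.Perm (Fin l))⁻¹ i))))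
    rw [SemidirectProduct.mul_left, SemidirectProduct.mul_right, Pi.mul_apply, map_mul,
      Subgroup.coe_mul, mul_inv_rev, Equiv.Perm.mul_apply]
    rfl

lemma wreathRepAux_apply (ρ : K →* ((Fin n → F) ≃ₗ[F] (Fin n → F)))
    (g : GroupWreath K L) (v : Fin l → Fin n → F) (i : Fin l) :
    wreathRepAux ρ g v i = ρ (g.left i) (v ((g.right : Equiv.Perm (Fin l))⁻¹ i)) := rfl

end Aux

/-- **Lemma 7.1.** For a group `K` acting on `Δ` and `L ≤ Sym(Fin ℓ)` with
`ℓ ≥ 1`, the wreath product in product action satisfies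
`lindim_F(K ≀ L, Δ^ℓ) ≤ ℓ · lindim_F(K, Δ)`. -/
theorem lindim_wreath_product_action_le (F : Type*) [Field F] (K : Type*) [Group K]
    (Δ : Type*) [MulAction K Δ] (l : ℕ) (hl : 1 ≤ l) (L : Subgroup (Equiv.Perm (Fin l))) :
    lindim F (GroupWreath K L) (Fin l → Δ) ≤ (l : ℕ∞) * lindim F K Δ := by
  classical
  by_cases h : ∃ n, ∃ (ρ : K →* ((Fin n → F) ≃ₗ[F] (Fin n → F))) (φ : Δ → (Fin n → F)),
      IsActionRep F ρ φ
  · set n := Nat.find h with hn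
    obtain ⟨ρ, φ, hφinj, hφ⟩ := Nat.find_spec h
    let e : (Fin (l * n) → F) ≃ₗ[F] (Fin l → Fin n → F) :=
      (LinearEquiv.funCongrLeft F F finProdFinEquiv).trans
        (LinearEquiv.curry F F (Fin l) (Fin n))
    let ρ' : GroupWreath K L →* ((Fin (l * n) → F) ≃ₗ[F] (Fin (l * n) → F)) :=
      { toFun := fun g => (e.trans (wreathRepAux (L := L) ρ g)).trans e.symm
        map_one' := by
          apply LinearEquiv.ext
          intro v
          show e.symm (wreathRepAux (L := L) ρ 1 (e v)) = v
          rw [map_one]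
          simp
        map_mul' := fun g₁ g₂ => by
          apply LinearEquiv.ext
          intro v
          show e.symm (wreathRepAux (L := L) ρ (g₁ * g₂) (e v))
            = e.symm (wreathRepAux (L := L) ρ g₁ (e (e.symm (wreathRepAux (L := L) ρ g₂ (e v)))))
          rw [map_mul]
          simp }
    let φ' : (Fin l → Δ) → (Fin (l * n) → F) := fun f => e.symm (fun i => φ (f i))
    have hrep : IsActionRep F ρ' φ' := by
      constructor
      · intro f f' hff'
        have h2 : (fun i => φ (f i)) = (fun i => φ (f' i)) := e.symm.injective hff'
        funext i
        exact hφinj (congrFun h2 i)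
      · intro g f
        show e.symm (fun i => φ ((g • f) i))
          = e.symm (wreathRepAux (L := L) ρ g (e (e.symm (fun i => φ (f i)))))
        rw [e.apply_symm_apply]
        congr 1
        funext i
        rw [wreathRepAux_apply]
        show φ (g.left i • f ((g.right : Equiv.Perm (Fin l))⁻¹ i)) = _
        rw [hφ]
    have h1 : lindim F (GroupWreath K L) (Fin l → Δ) ≤ ((l * n : ℕ) : ℕ∞) :=
      iInf₂_le (l * n) ⟨ρ', φ', hrep⟩
    have h2 : (n : ℕ∞) ≤ lindim F K Δ :=
      le_iInf₂ fun m hm => Nat.cast_le.mpr (Nat.find_min' h hm)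
    calc lindim F (GroupWreath K L) (Fin l → Δ) ≤ ((l * n : ℕ) : ℕ∞) := h1
      _ = (l : ℕ∞) * (n : ℕ∞) := by push_cast; ring
      _ ≤ (l : ℕ∞) * lindim F K Δ := mul_le_mul_right h2 _
  · have htop : lindim F K Δ = ⊤ := by
      rw [lindim]
      simp only [iInf_eq_top]
      intro m hm
      exact absurd ⟨m, hm⟩ h
    rw [htop, ENat.mul_top (by exact_mod_cast Nat.one_le_iff_ne_zero.mp hl)]
    exact le_top
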